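/- arXiv:1209.4438 — 4 statements merged into one kernel-verified Lean document; each statement's English description precedes it below -/
import Mathlib

section
/- For any positive integers j and d, any (j+3, j+d)-configuration in a 4-cycle system contains a (j+3, j)-configuration as a substructure; that is, any set of j+d pairwise edge-disjoint 4-cycles whose union contains exactly j+3 vertices has a subset of j of its 4-cycles whose union still contains exactly j+3 vertices. -/
open Finset

/-- The edge set of the 4-cycle `(a, b, c, d)`: edges {a,b}, {b,c}, {c,d}, {d,a}. -/
def cycEdges {V : Type*} [DecidableEq V] (a b c d : V) : Finset (Sym2 V) :=
  {s(a, b), s(b, c), s(c, d), s(d, a)}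

/-- `E` is the edge set of a 4-cycle on four distinct vertices. -/
def IsFourCycle {V : Type*} [DecidableEq V] (E : Finset (Sym2 V)) : Prop :=
  ∃ a b c d : V, ([a, b, c, d] : List V).Nodup ∧ E = cycEdges a b c d

/-- The set of vertices covered by a set of edges. -/
def edgeVerts {V : Type*} [DecidableEq V] (E : Finset (Sym2 V)) : Finset V :=
  E.sup (Sym2.lift ⟨fun x y => ({x, y} : Finset V), fun x y => Finset.pair_comm x y⟩)

/-- A `(k, l)`-configuration: a set of `l` pairwise edge-disjoint 4-cycles whose
union contains exactly `k` vertices. -/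
def IsConfiguration {V : Type*} [DecidableEq V] (k l : ℕ)
    (D : Finset (Finset (Sym2 V))) : Prop :=
  D.card = l ∧ (∀ E ∈ D, IsFourCycle E) ∧
    (∀ E ∈ D, ∀ F ∈ D, E ≠ F → Disjoint E F) ∧
    (D.sup edgeVerts).card = k

/-- `C` is a 4-cycle system: a collection of 4-cycles whose edge sets partition
the edge set of the complete graph on `V`. -/
def IsFourCycleSystem {V : Type*} [DecidableEq V] (C : Finset (Finset (Sym2 V))) : Prop :=
  (∀ E ∈ C, IsFourCycle E) ∧ ∀ e : Sym2 V, ¬ e.IsDiag → ∃! E, E ∈ C ∧ e ∈ E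

/-- `C` is a 4-cycle packing: a set of pairwise edge-disjoint 4-cycles. -/
def IsFourCyclePacking {V : Type*} [DecidableEq V] (C : Finset (Finset (Sym2 V))) : Prop :=
  (∀ E ∈ C, IsFourCycle E) ∧ ∀ E ∈ C, ∀ F ∈ C, E ≠ F → Disjoint E F

/-- `C` is `r`-sparse: it contains no `(j+3, j)`-configuration for `2 ≤ j ≤ r`. -/
def RSparse {V : Type*} [DecidableEq V] (r : ℕ) (C : Finset (Finset (Sym2 V))) : Prop :=
  ∀ j, 2 ≤ j → j ≤ r → ∀ D ⊆ C, ¬ IsConfiguration (j + 3) j D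

/-- Two 4-cycles form a double-diamond: they are `(a,b,c,d)` and `(a,e,c,f)`,
sharing the diagonal {a,c}. -/
def IsDoubleDiamond {V : Type*} [DecidableEq V] (E F : Finset (Sym2 V)) : Prop :=
  ∃ a b c d e f : V, ([a, b, c, d, e, f] : List V).Nodup ∧
    E = cycEdges a b c d ∧ F = cycEdges a e c f

/-- `C` is D-avoiding: no two of its 4-cycles form a double-diamond. -/
def DAvoiding {V : Type*} [DecidableEq V] (C : Finset (Finset (Sym2 V))) : Prop :=
  ∀ E ∈ C, ∀ F ∈ C, ¬ IsDoubleDiamond E F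

/-- `C` is strictly `r`-sparse: `r`-sparse and D-avoiding. -/
def StrictlyRSparse {V : Type*} [DecidableEq V] (r : ℕ)
    (C : Finset (Finset (Sym2 V))) : Prop :=
  RSparse r C ∧ DAvoiding C

lemma edgeVerts_cycEdges {V : Type*} [DecidableEq V] (a b c d : V) :
    edgeVerts (cycEdges a b c d) = {a, b, c, d} := by
  ext v
  simp only [cycEdges, edgeVerts, Finset.mem_sup, Finset.mem_insert, Finset.mem_singleton]
  constructor
  · rintro ⟨e, (rfl|rfl|rfl|rfl), hv⟩ <;> simp only [Sym2.lift_mk] at hv <;>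
      simp only [Finset.mem_insert, Finset.mem_singleton] at hv <;> tauto
  · rintro (rfl|rfl|rfl|rfl)
    · exact ⟨s(v,b), Or.inl rfl, by simp [Sym2.lift_mk]⟩
    · exact ⟨s(a,v), Or.inl rfl, by simp [Sym2.lift_mk]⟩
    · exact ⟨s(v,d), Or.inr (Or.inr (Or.inl rfl)), by simp [Sym2.lift_mk]⟩
    · exact ⟨s(v,a), Or.inr (Or.inr (Or.inr rfl)), by simp [Sym2.lift_mk]⟩

lemma card_edgeVerts_of_fourCycle {V : Type*} [DecidableEq V] {E : Finset (Sym2 V)}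
    (h : IsFourCycle E) : (edgeVerts E).card = 4 := by
  obtain ⟨a, b, c, d, hnd, rfl⟩ := h
  rw [edgeVerts_cycEdges]
  simp only [List.nodup_cons, List.mem_cons, List.not_mem_nil, or_false,
    List.mem_singleton] at hnd
  rw [Finset.card_insert_of_notMem (by simp; tauto),
    Finset.card_insert_of_notMem (by simp; tauto),
    Finset.card_insert_of_notMem (by simp; tauto), Finset.card_singleton]

/-- Any `(j+3, j+d)`-configuration contains a `(j+3, j)`-configuration. -/
theorem config_contains_subconfiguration {V : Type*} [DecidableEq V] (j d : ℕ)
    (hj : 0 < j) (hd : 0 < d) (A : Finset (Finset (Sym2 V)))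
    (hA : IsConfiguration (j + 3) (j + d) A) :
    ∃ B ⊆ A, IsConfiguration (j + 3) j B := by
  obtain ⟨hcard, hfour, hdisj, hverts⟩ := hA
  -- minimal covering subset
  have hne : (A.powerset.filter (fun S => S.sup edgeVerts = A.sup edgeVerts)).Nonempty :=
    ⟨A, by simp⟩
  obtain ⟨S, hSmem, hSmin⟩ := Finset.exists_min_image _ Finset.card hne
  simp only [Finset.mem_filter, Finset.mem_powerset] at hSmem
  obtain ⟨hSA, hSsup⟩ := hSmem
  -- minimality: each cycle has a private vertex
  have hmin : ∀ E ∈ S, ∃ v, v ∈ edgeVerts E ∧ v ∉ (S.erase E).sup edgeVerts := by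
    intro E hE
    by_contra h
    push_neg at h
    have hsub : edgeVerts E ⊆ (S.erase E).sup edgeVerts := fun v hv => h v hv
    have hsupeq : (S.erase E).sup edgeVerts = S.sup edgeVerts := by
      conv_rhs => rw [← Finset.insert_erase hE]
      rw [Finset.sup_insert]
      exact (sup_eq_right.mpr hsub).symm
    have hmem : S.erase E ∈ A.powerset.filter (fun T => T.sup edgeVerts = A.sup edgeVerts) := by
      simp only [Finset.mem_filter, Finset.mem_powerset]
      exact ⟨(Finset.erase_subset _ _).trans hSA, hsupeq.trans hSsup⟩
    have := hSmin _ hmem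
    have hlt : (S.erase E).card < S.card := Finset.card_erase_lt_of_mem hE
    omega
  have hVne : Nonempty V := by
    have : (A.sup edgeVerts).Nonempty := Finset.card_pos.mp (by omega)
    exact ⟨this.choose⟩
  choose! v hv1 hv2 using hmin
  -- S nonempty
  have hSne : S.Nonempty := by
    rcases S.eq_empty_or_nonempty with rfl | h
    · simp at hSsup; rw [← hSsup] at hverts; simp at hverts
    · exact h
  obtain ⟨E₀, hE₀⟩ := hSne
  have hE₀four : IsFourCycle E₀ := hfour E₀ (hSA hE₀)
  -- injectivity of private vertices
  have hedgesub : ∀ E ∈ S, ∀ F ∈ S, E ≠ F → edgeVerts E ⊆ (S.erase F).sup edgeVerts :=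
    fun E hE F _ hEF => Finset.le_sup (f := edgeVerts) (Finset.mem_erase.mpr ⟨hEF, hE⟩)
  have hinj : Set.InjOn v ↑(S.erase E₀) := by
    intro E hE F hF hEF
    simp only [Finset.coe_erase, Set.mem_diff, Finset.mem_coe] at hE hF
    by_contra hne'
    exact hv2 F hF.1 (hEF ▸ hedgesub E hE.1 F hF.1 hne' (hv1 E hE.1))
  -- the image set
  set T := (S.erase E₀).image v with hT
  have hTcard : T.card = S.card - 1 := by
    rw [hT, Finset.card_image_of_injOn hinj, Finset.card_erase_of_mem hE₀]
  have hTsub : T ⊆ (A.sup edgeVerts) \ edgeVerts E₀ := by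
    intro x hx
    simp only [hT, Finset.mem_image] at hx
    obtain ⟨E, hE, rfl⟩ := hx
    have hES : E ∈ S := Finset.mem_of_mem_erase hE
    have hEne : E ≠ E₀ := (Finset.mem_erase.mp hE).1
    refine Finset.mem_sdiff.mpr ⟨?_, ?_⟩
    · have h := (Finset.le_sup (f := edgeVerts) hES : edgeVerts E ⊆ S.sup edgeVerts)
      exact hSsup ▸ h (hv1 E hES)
    · intro hcon
      exact hv2 E hES (hedgesub E₀ hE₀ E hES (Ne.symm hEne) hcon)
  have hE₀sub : edgeVerts E₀ ⊆ A.sup edgeVerts := hSsup ▸ Finset.le_sup (f := edgeVerts) hE₀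
  -- counting
  have hcount : 4 + (S.card - 1) ≤ j + 3 := by
    have h1 : edgeVerts E₀ ∪ T ⊆ A.sup edgeVerts := by
      apply Finset.union_subset hE₀sub (hTsub.trans (Finset.sdiff_subset))
    have h2 : Disjoint (edgeVerts E₀) T := by
      refine Finset.disjoint_left.mpr fun x hx hxT => ?_
      exact (Finset.mem_sdiff.mp (hTsub hxT)).2 hx
    have h3 := Finset.card_le_card h1
    rw [Finset.card_union_of_disjoint h2, card_edgeVerts_of_fourCycle hE₀four, hTcard] at h3
    omega
  have hScard : S.card ≤ j := by
    have : 1 ≤ S.card := Finset.card_pos.mpr ⟨E₀, hE₀⟩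
    omega
  -- extend S to B of size j
  obtain ⟨B, hSB, hBA, hBcard⟩ := Finset.exists_subsuperset_card_eq hSA hScard (by omega)
  refine ⟨B, hBA, hBcard, fun E hE => hfour E (hBA hE),
    fun E hE F hF => hdisj E (hBA hE) F (hBA hF), ?_⟩
  have hsub1 : S.sup edgeVerts ≤ B.sup edgeVerts := Finset.sup_mono hSB
  have hsub2 : B.sup edgeVerts ≤ A.sup edgeVerts := Finset.sup_mono hBA
  have : B.sup edgeVerts = A.sup edgeVerts := le_antisymm hsub2 (hSsup ▸ hsub1)
  rw [this, hverts]
end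

section
/- Let A be a (j+3, j+d)-configuration, i.e., a set of j+d pairwise edge-disjoint 4-cycles whose union contains exactly j+3 vertices, where j and d are positive integers. Then A contains a 4-cycle C such that each vertex of C is also contained in some other 4-cycle of A (so that discarding C yields a (j+3, j+d-1)-configuration). -/
open Finset

lemma mem_edgeVerts' {V : Type*} [DecidableEq V] {E : Finset (Sym2 V)} {x : V} :
    x ∈ edgeVerts E ↔ ∃ e ∈ E, x ∈ e := by
  simp only [edgeVerts, Finset.mem_sup]
  refine exists_congr fun e => and_congr_right fun he => ?_
  induction e using Sym2.ind with
  | _ y z => simp [Sym2.mem_iff]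

/-- Any `(j+3, j+d)`-configuration `A` contains a 4-cycle `C` each of whose vertices
lies in another 4-cycle of `A`, so that discarding `C` yields a
`(j+3, j+d-1)`-configuration. -/
theorem exists_discardable_cycle {V : Type*} [DecidableEq V] (j d : ℕ)
    (hj : 0 < j) (hd : 0 < d) (A : Finset (Finset (Sym2 V)))
    (hA : IsConfiguration (j + 3) (j + d) A) :
    ∃ C ∈ A, (∀ x ∈ edgeVerts C, ∃ C' ∈ A, C' ≠ C ∧ x ∈ edgeVerts C') ∧
      IsConfiguration (j + 3) (j + d - 1) (A.erase C) := by
  classical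
  obtain ⟨hcard, hcyc, hdisj, hverts⟩ := hA
  set W := A.sup edgeVerts with hW
  have hWsub : ∀ E ∈ A, edgeVerts E ⊆ W := fun E hE => Finset.le_sup hE
  set c : V → ℕ := fun v => (A.filter (fun E => v ∈ edgeVerts E)).card with hc
  -- each cycle has exactly 4 vertices
  have h4 : ∀ E ∈ A, (edgeVerts E).card = 4 := by
    intro E hE
    obtain ⟨a, b, c', d', hnd, rfl⟩ := hcyc E hE
    rw [edgeVerts_cycEdges]
    simp only [List.nodup_cons, List.mem_cons, List.mem_singleton, List.not_mem_nil,
      or_false, not_or, List.nodup_nil, and_true] at hnd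
    rw [card_insert_of_notMem (by simp; tauto), card_insert_of_notMem (by simp; tauto),
      card_insert_of_notMem (by simp; tauto), card_singleton]
  -- sum identity
  have hsum : ∑ v ∈ W, c v = 4 * (j + d) := by
    have key : ∑ E ∈ A, (edgeVerts E).card = ∑ v ∈ W, c v := by
      calc ∑ E ∈ A, (edgeVerts E).card
          = ∑ E ∈ A, ∑ v ∈ W, (if v ∈ edgeVerts E then 1 else 0) := by
            refine Finset.sum_congr rfl fun E hE => ?_
            rw [← Finset.card_filter]
            congr 1
            rw [Finset.filter_mem_eq_inter, Finset.inter_eq_right.mpr (hWsub E hE)]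
        _ = ∑ v ∈ W, ∑ E ∈ A, (if v ∈ edgeVerts E then 1 else 0) := Finset.sum_comm
        _ = ∑ v ∈ W, c v := by
            refine Finset.sum_congr rfl fun v _ => ?_
            simp only [hc]
            exact (Finset.card_filter _ _).symm
    rw [← key, Finset.sum_congr rfl h4, Finset.sum_const, smul_eq_mul, hcard, mul_comm]
  -- edges are nondiagonal with explicit endpoints
  have hedge : ∀ E ∈ A, ∀ e ∈ E, ∃ x y : V, x ≠ y ∧ e = s(x, y) := by
    intro E hE e he
    obtain ⟨a, b, c', d', hnd, rfl⟩ := hcyc E hE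
    simp only [List.nodup_cons, List.mem_cons, List.mem_singleton, List.not_mem_nil,
      or_false, not_or, List.nodup_nil, and_true] at hnd
    simp only [cycEdges, Finset.mem_insert, Finset.mem_singleton] at he
    rcases he with rfl | rfl | rfl | rfl
    · exact ⟨a, b, by tauto, rfl⟩
    · exact ⟨b, c', by tauto, rfl⟩
    · exact ⟨c', d', by tauto, rfl⟩
    · exact ⟨d', a, by tauto, rfl⟩
  -- each vertex in a cycle is on ≥ 2 of its edges
  have hfilter2 : ∀ E ∈ A, ∀ v ∈ edgeVerts E, 2 ≤ (E.filter (fun e => v ∈ e)).card := by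
    intro E hE v hv
    obtain ⟨a, b, c', d', hnd, rfl⟩ := hcyc E hE
    rw [edgeVerts_cycEdges] at hv
    simp only [List.nodup_cons, List.mem_cons, List.mem_singleton, List.not_mem_nil,
      or_false, not_or, List.nodup_nil, and_true] at hnd
    simp only [Finset.mem_insert, Finset.mem_singleton] at hv
    have h2le : 1 < (Finset.filter (fun e => v ∈ e) (cycEdges a b c' d')).card → 2 ≤ (Finset.filter (fun e => v ∈ e) (cycEdges a b c' d')).card := fun h => h
    refine h2le (Finset.one_lt_card.mpr ?_)
    rcases hv with rfl | rfl | rfl | rfl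
    · exact ⟨s(v, b), by simp [cycEdges], s(d', v), by simp [cycEdges],
        by simp [Sym2.eq_iff]; tauto⟩
    · exact ⟨s(a, v), by simp [cycEdges], s(v, c'), by simp [cycEdges],
        by simp [Sym2.eq_iff]; tauto⟩
    · exact ⟨s(b, v), by simp [cycEdges], s(v, d'), by simp [cycEdges],
        by simp [Sym2.eq_iff]; tauto⟩
    · exact ⟨s(c', v), by simp [cycEdges], s(v, a), by simp [cycEdges],
        by simp [Sym2.eq_iff]; tauto⟩
  -- degree bound
  have hdeg : ∀ v ∈ W, 2 * c v ≤ j + 2 := by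
    intro v hv
    set T := A.biUnion (fun E => E.filter (fun e => v ∈ e)) with hT
    have hTcard : T.card = ∑ E ∈ A, (E.filter (fun e => v ∈ e)).card :=
      Finset.card_biUnion (fun E hE F hF hEF =>
        (hdisj E hE F hF hEF).mono (filter_subset _ _) (filter_subset _ _))
    have h1 : 2 * c v ≤ T.card := by
      rw [hTcard]
      calc 2 * c v = ∑ _E ∈ A.filter (fun E => v ∈ edgeVerts E), 2 := by
            rw [Finset.sum_const, smul_eq_mul, mul_comm]
        _ ≤ ∑ E ∈ A.filter (fun E => v ∈ edgeVerts E), (E.filter (fun e => v ∈ e)).card := by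
            refine Finset.sum_le_sum fun E hE => ?_
            rw [mem_filter] at hE
            exact hfilter2 E hE.1 v hE.2
        _ ≤ ∑ E ∈ A, (E.filter (fun e => v ∈ e)).card :=
            Finset.sum_le_sum_of_subset (filter_subset _ _)
    have h2 : T.card ≤ j + 2 := by
      have hsub : T ⊆ (W.erase v).image (fun u => s(v, u)) := by
        intro e he
        simp only [hT, Finset.mem_biUnion, Finset.mem_filter] at he
        obtain ⟨E, hE, heE, hve⟩ := he
        obtain ⟨x, y, hxy, rfl⟩ := hedge E hE e heE
        have hxW : x ∈ W := hWsub E hE (mem_edgeVerts'.mpr ⟨_, heE, by simp⟩)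
        have hyW : y ∈ W := hWsub E hE (mem_edgeVerts'.mpr ⟨_, heE, by simp⟩)
        rw [Sym2.mem_iff] at hve
        rcases hve with rfl | rfl
        · exact Finset.mem_image.mpr ⟨y, Finset.mem_erase.mpr ⟨fun h => hxy h.symm, hyW⟩, rfl⟩
        · exact Finset.mem_image.mpr ⟨x, Finset.mem_erase.mpr ⟨hxy, hxW⟩, Sym2.eq_swap⟩
      calc T.card ≤ _ := Finset.card_le_card hsub
        _ ≤ (W.erase v).card := Finset.card_image_le
        _ = j + 2 := by rw [Finset.card_erase_of_mem hv, hverts]; omega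
    omega
  -- main step: exists a cycle all of whose vertices are shared
  have hex : ∃ C ∈ A, ∀ x ∈ edgeVerts C, ∃ C' ∈ A, C' ≠ C ∧ x ∈ edgeVerts C' := by
    by_contra hno
    push_neg at hno
    have hVne : Nonempty V := by
      have : W.Nonempty := Finset.card_pos.mp (by omega)
      exact ⟨this.choose⟩
    choose! g hg1 hg2 using hno
    have hinj : Set.InjOn g (A : Set (Finset (Sym2 V))) := by
      intro C hC C' hC' heq
      by_contra hne
      have := hg2 C hC C' hC' (Ne.symm hne)
      rw [heq] at this
      exact this (hg1 C' hC')
    set P := A.image g with hP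
    have hPcard : P.card = j + d := by rw [hP, Finset.card_image_of_injOn hinj, hcard]
    have hPW : P ⊆ W := by
      intro v hv
      obtain ⟨C, hC, rfl⟩ := Finset.mem_image.mp hv
      exact hWsub C hC (hg1 C hC)
    have hP1 : ∀ v ∈ P, c v = 1 := by
      intro v hv
      obtain ⟨C, hC, rfl⟩ := Finset.mem_image.mp hv
      have hfil : A.filter (fun E => g C ∈ edgeVerts E) = {C} := by
        ext F
        simp only [Finset.mem_filter, Finset.mem_singleton]
        constructor
        · rintro ⟨hF, hgF⟩
          by_contra hne
          exact hg2 C hC F hF hne hgF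
        · rintro rfl
          exact ⟨hC, hg1 _ hC⟩
      show (A.filter (fun E => g C ∈ edgeVerts E)).card = 1
      rw [hfil, Finset.card_singleton]
    have hsplit : ∑ v ∈ W \ P, c v + ∑ v ∈ P, c v = ∑ v ∈ W, c v :=
      Finset.sum_sdiff hPW
    have hPsum : ∑ v ∈ P, c v = j + d := by
      rw [Finset.sum_congr rfl hP1, Finset.sum_const, smul_eq_mul, mul_one, hPcard]
    have hq : (W \ P).card ≤ 2 := by
      have h1 : P.card ≤ W.card := Finset.card_le_card hPW
      have h2 : (W \ P).card = W.card - P.card := Finset.card_sdiff_of_subset hPW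
      rw [hverts] at h1 h2
      rw [hPcard] at h1 h2
      omega
    have hSbound : 2 * ∑ v ∈ W \ P, c v ≤ 2 * (j + 2) := by
      calc 2 * ∑ v ∈ W \ P, c v = ∑ v ∈ W \ P, 2 * c v := Finset.mul_sum _ _ _
        _ ≤ ∑ _v ∈ W \ P, (j + 2) :=
            Finset.sum_le_sum fun v hv => hdeg v (Finset.mem_sdiff.mp hv).1
        _ = (W \ P).card * (j + 2) := by rw [Finset.sum_const, smul_eq_mul]
        _ ≤ 2 * (j + 2) := Nat.mul_le_mul_right _ hq
    omega
  obtain ⟨C, hC, hcov⟩ := hex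
  refine ⟨C, hC, hcov, ?_, fun E hE => hcyc E (Finset.mem_of_mem_erase hE),
    fun E hE F hF => hdisj E (Finset.mem_of_mem_erase hE) F (Finset.mem_of_mem_erase hF), ?_⟩
  · rw [Finset.card_erase_of_mem hC, hcard]
  · have hsupeq : (A.erase C).sup edgeVerts = W := by
      refine Finset.Subset.antisymm (Finset.sup_mono (Finset.erase_subset _ _)) ?_
      intro v hv
      obtain ⟨E, hE, hvE⟩ := Finset.mem_sup.mp hv
      by_cases hEC : E = C
      · obtain ⟨C', hC', hne, hv'⟩ := hcov v (hEC ▸ hvE)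
        exact Finset.mem_sup.mpr ⟨C', Finset.mem_erase.mpr ⟨hne, hC'⟩, hv'⟩
      · exact Finset.mem_sup.mpr ⟨E, Finset.mem_erase.mpr ⟨hEC, hE⟩, hvE⟩
    rw [hsupeq, hverts]
end

section
/- There exists a strictly 4-sparse 4-cycle system of order 9. -/
open Finset

set_option maxRecDepth 100000

/-! ### The explicit system -/

def cyc : Fin 9 → Finset (Sym2 (Fin 9)) :=
  ![cycEdges 0 1 6 7, cycEdges 0 2 8 4, cycEdges 0 3 7 8, cycEdges 0 5 3 6,
    cycEdges 1 2 4 3, cycEdges 1 4 5 8, cycEdges 1 5 2 7, cycEdges 2 3 8 6,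
    cycEdges 4 6 5 7]

def myC : Finset (Finset (Sym2 (Fin 9))) := (univ : Finset (Fin 9)).image cyc

lemma key_cover : ∀ a b : Fin 9, a ≠ b →
    ((univ : Finset (Fin 9)).filter (fun i => s(a,b) ∈ cyc i)).card = 1 := by decide

lemma cyc_inj : ∀ i j : Fin 9, i ≠ j → cyc i ≠ cyc j := by decide

lemma key2 : ∀ i j : Fin 9, i ≠ j →
    (edgeVerts (cyc i) ∪ edgeVerts (cyc j)).card ≠ 5 := by decide

lemma key3 : ∀ i j k : Fin 9, i ≠ j → i ≠ k → j ≠ k →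
    (edgeVerts (cyc i) ∪ edgeVerts (cyc j) ∪ edgeVerts (cyc k)).card ≠ 6 := by decide

lemma key4 : ∀ i j k l : Fin 9, i ≠ j → i ≠ k → i ≠ l → j ≠ k → j ≠ l → k ≠ l →
    (edgeVerts (cyc i) ∪ edgeVerts (cyc j) ∪ edgeVerts (cyc k) ∪ edgeVerts (cyc l)).card ≠ 7 := by
  decide

lemma keyDD : ∀ i j : Fin 9, i ≠ j →
    ¬ ∃ a c : Fin 9, a ≠ c ∧ a ∈ edgeVerts (cyc i) ∧ c ∈ edgeVerts (cyc i) ∧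
      a ∈ edgeVerts (cyc j) ∧ c ∈ edgeVerts (cyc j) ∧ s(a,c) ∉ cyc i ∧ s(a,c) ∉ cyc j := by decide

lemma cyc_fourCycle : ∀ i : Fin 9, IsFourCycle (cyc i) := by
  intro i
  fin_cases i
  exacts [⟨0,1,6,7, by decide, by decide⟩, ⟨0,2,8,4, by decide, by decide⟩,
    ⟨0,3,7,8, by decide, by decide⟩, ⟨0,5,3,6, by decide, by decide⟩,
    ⟨1,2,4,3, by decide, by decide⟩, ⟨1,4,5,8, by decide, by decide⟩,
    ⟨1,5,2,7, by decide, by decide⟩, ⟨2,3,8,6, by decide, by decide⟩,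
    ⟨4,6,5,7, by decide, by decide⟩]

lemma not_mem_diag {V : Type*} [DecidableEq V] (a b c d : V)
    (hab : a ≠ b) (hac : a ≠ c) (had : a ≠ d) (hbc : b ≠ c) (hbd : b ≠ d) (hcd : c ≠ d) :
    s(a, c) ∉ cycEdges a b c d := by
  simp only [cycEdges, Finset.mem_insert, Finset.mem_singleton, Sym2.eq_iff]
  push_neg
  tauto

/-- There exists a strictly 4-sparse 4-cycle system of order 9. -/
theorem exists_strictly_four_sparse_order_nine :
    ∃ C : Finset (Finset (Sym2 (Fin 9))), IsFourCycleSystem C ∧ StrictlyRSparse 4 C := by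
  refine ⟨myC, ⟨?_, ?_⟩, ?_, ?_⟩
  · -- all four-cycles
    intro E hE
    obtain ⟨i, -, rfl⟩ := Finset.mem_image.mp hE
    exact cyc_fourCycle i
  · -- each non-diagonal edge in exactly one cycle
    intro e he
    induction e using Sym2.ind with
    | _ a b =>
      have hab : a ≠ b := by simpa [Sym2.mk_isDiag_iff] using he
      obtain ⟨i0, hi0⟩ := Finset.card_eq_one.mp (key_cover a b hab)
      have hmem : s(a,b) ∈ cyc i0 := by
        have := hi0 ▸ Finset.mem_singleton_self i0
        exact (Finset.mem_filter.mp this).2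
      refine ⟨cyc i0, ⟨Finset.mem_image_of_mem cyc (mem_univ i0), hmem⟩, ?_⟩
      rintro F ⟨hF, heF⟩
      obtain ⟨j, -, rfl⟩ := Finset.mem_image.mp hF
      have : j ∈ (univ : Finset (Fin 9)).filter (fun i => s(a,b) ∈ cyc i) :=
        Finset.mem_filter.mpr ⟨mem_univ j, heF⟩
      rw [hi0, Finset.mem_singleton] at this
      rw [this]
  · -- RSparse 4
    intro j h2 h4 D hD hcfg
    obtain ⟨hcard, -, -, hverts⟩ := hcfg
    have getIdx : ∀ E ∈ D, ∃ i : Fin 9, cyc i = E := by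
      intro E hE
      obtain ⟨i, -, h⟩ := Finset.mem_image.mp (hD hE)
      exact ⟨i, h⟩
    interval_cases j
    · -- j = 2
      obtain ⟨E1, E2, h12, rfl⟩ := Finset.card_eq_two.mp hcard
      obtain ⟨i1, rfl⟩ := getIdx E1 (by simp)
      obtain ⟨i2, rfl⟩ := getIdx E2 (by simp)
      have hij : i1 ≠ i2 := fun h => h12 (by rw [h])
      refine key2 i1 i2 hij ?_
      have hs : ({cyc i1, cyc i2} : Finset (Finset (Sym2 (Fin 9)))).sup edgeVerts
          = edgeVerts (cyc i1) ∪ edgeVerts (cyc i2) := by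
        simp [Finset.sup_insert, Finset.sup_singleton, Finset.sup_eq_union]
      rw [hs] at hverts
      simpa using hverts
    · -- j = 3
      obtain ⟨E1, E2, E3, h12, h13, h23, rfl⟩ := Finset.card_eq_three.mp hcard
      obtain ⟨i1, rfl⟩ := getIdx E1 (by simp)
      obtain ⟨i2, rfl⟩ := getIdx E2 (by simp)
      obtain ⟨i3, rfl⟩ := getIdx E3 (by simp)
      refine key3 i1 i2 i3 (fun h => h12 (by rw [h])) (fun h => h13 (by rw [h]))
        (fun h => h23 (by rw [h])) ?_
      have hs : ({cyc i1, cyc i2, cyc i3} : Finset (Finset (Sym2 (Fin 9)))).sup edgeVerts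
          = edgeVerts (cyc i1) ∪ edgeVerts (cyc i2) ∪ edgeVerts (cyc i3) := by
        simp [Finset.sup_insert, Finset.sup_singleton, Finset.sup_eq_union, Finset.union_assoc]
      rw [hs] at hverts
      simpa using hverts
    · -- j = 4
      obtain ⟨E1, t, h1t, rfl, ht3⟩ := Finset.card_eq_succ.mp hcard
      obtain ⟨E2, E3, E4, h23, h24, h34, rfl⟩ := Finset.card_eq_three.mp ht3
      have h12 : E1 ≠ E2 := fun h => h1t (by simp [h])
      have h13 : E1 ≠ E3 := fun h => h1t (by simp [h])
      have h14 : E1 ≠ E4 := fun h => h1t (by simp [h])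
      obtain ⟨i1, rfl⟩ := getIdx E1 (by simp)
      obtain ⟨i2, rfl⟩ := getIdx E2 (by simp)
      obtain ⟨i3, rfl⟩ := getIdx E3 (by simp)
      obtain ⟨i4, rfl⟩ := getIdx E4 (by simp)
      refine key4 i1 i2 i3 i4 (fun h => h12 (by rw [h])) (fun h => h13 (by rw [h]))
        (fun h => h14 (by rw [h])) (fun h => h23 (by rw [h])) (fun h => h24 (by rw [h]))
        (fun h => h34 (by rw [h])) ?_
      have hs : ({cyc i1, cyc i2, cyc i3, cyc i4} : Finset (Finset (Sym2 (Fin 9)))).sup edgeVerts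
          = edgeVerts (cyc i1) ∪ edgeVerts (cyc i2) ∪ edgeVerts (cyc i3) ∪ edgeVerts (cyc i4) := by
        simp [Finset.sup_insert, Finset.sup_singleton, Finset.sup_eq_union, Finset.union_assoc]
      rw [hs] at hverts
      simpa using hverts
  · -- D-avoiding
    rintro E hE F hF ⟨a, b, c, d, e, f, hnd, rfl, rfl⟩
    simp only [List.nodup_cons, List.mem_cons, List.mem_singleton, List.not_mem_nil,
      or_false, not_or, List.nodup_nil, and_true, not_false_eq_true] at hnd
    obtain ⟨⟨hab, hac, had, hae, haf⟩, ⟨hbc, hbd, hbe, hbf⟩, ⟨hcd, hce, hcf⟩, ⟨hde, hdf⟩, hef⟩ := hnd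
    obtain ⟨i, -, hi⟩ := Finset.mem_image.mp hE
    obtain ⟨j, -, hj⟩ := Finset.mem_image.mp hF
    have hEF : cycEdges a b c d ≠ cycEdges a e c f := by
      intro h
      have h1 : s(a,b) ∈ cycEdges a b c d := by simp [cycEdges]
      rw [h] at h1
      simp only [cycEdges, Finset.mem_insert, Finset.mem_singleton, Sym2.eq_iff] at h1
      tauto
    have hij : i ≠ j := by
      rintro rfl
      exact hEF (hi.symm.trans hj)
    refine keyDD i j hij ⟨a, c, hac, ?_, ?_, ?_, ?_, ?_, ?_⟩
    · rw [hi, edgeVerts_cycEdges]; simp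
    · rw [hi, edgeVerts_cycEdges]; simp
    · rw [hj, edgeVerts_cycEdges]; simp
    · rw [hj, edgeVerts_cycEdges]; simp
    · rw [hi]; exact not_mem_diag a b c d hab hac had hbc hbd hcd
    · rw [hj]; exact not_mem_diag a e c f hae hac haf (fun h => hce h.symm) hef hcf
end

section
/- Fix an integer r ≥ 2 and a real constant c' with 0 < c' < 1/44. Let F be the family consisting of all (j+3,j)-configurations for 2 ≤ j ≤ r together with all (4,2)- and (6,2)-configurations, and for a positive integer v let ex(v,F) denote the largest integer n such that there exists a set of n 4-cycles on a v-element set containing no configuration isomorphic to a member of F. Then there exists a function h(v) = O(v) such that for all sufficiently large v, ex(v,F) ≥ (c'(1 − 44c')/16)·v² − h(v). In particular ex(v,F) grows quadratically in v. -/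
open Finset

/-- A set of `l` (not necessarily edge-disjoint) 4-cycles on exactly `k` vertices. -/
def IsWeakConfiguration {V : Type*} [DecidableEq V] (k l : ℕ)
    (D : Finset (Finset (Sym2 V))) : Prop :=
  D.card = l ∧ (∀ E ∈ D, IsFourCycle E) ∧ (D.sup edgeVerts).card = k

/-- `S` contains no configuration isomorphic to a member of the family `F` consisting
of all `(j+3, j)`-configurations for `2 ≤ j ≤ r` together with all `(4,2)`- and
`(6,2)`-configurations. -/
def FFree {V : Type*} [DecidableEq V] (r : ℕ) (S : Finset (Finset (Sym2 V))) : Prop :=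
  ∀ D ⊆ S, ¬ IsWeakConfiguration 4 2 D ∧ ¬ IsWeakConfiguration 6 2 D ∧
    ∀ j, 2 ≤ j → j ≤ r → ¬ IsConfiguration (j + 3) j D

namespace ExAux

variable {X : Type*} [DecidableEq X]

lemma sum_weights (A : Finset X) (p q : ℝ) (hpq : p + q = 1) :
    ∑ S ∈ A.powerset, p ^ S.card * q ^ (A.card - S.card) = 1 := by
  have h := Finset.prod_add (fun _ : X => p) (fun _ : X => q) A
  simp only [Finset.prod_const] at h
  have h2 : ∑ t ∈ A.powerset, p ^ t.card * q ^ (A \ t).card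
      = ∑ S ∈ A.powerset, p ^ S.card * q ^ (A.card - S.card) :=
    Finset.sum_congr rfl fun t ht => by
      rw [Finset.card_sdiff_of_subset (Finset.mem_powerset.mp ht)]
  rw [h2] at h
  rw [← h, hpq, one_pow]

lemma sum_weights_superset (A D : Finset X) (hD : D ⊆ A) (p q : ℝ) (hpq : p + q = 1) :
    ∑ S ∈ A.powerset.filter (fun S => D ⊆ S), p ^ S.card * q ^ (A.card - S.card)
      = p ^ D.card := by
  have key : ∑ T ∈ (A \ D).powerset, p ^ (T.card + D.card) * q ^ ((A \ D).card - T.card)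
      = p ^ D.card := by
    have : ∀ T ∈ (A \ D).powerset, p ^ (T.card + D.card) * q ^ ((A \ D).card - T.card)
        = p ^ D.card * (p ^ T.card * q ^ ((A \ D).card - T.card)) := by
      intro T _; rw [pow_add]; ring
    rw [Finset.sum_congr rfl this, ← Finset.mul_sum, sum_weights _ _ _ hpq, mul_one]
  rw [← key]
  refine Finset.sum_nbij' (fun S => S \ D) (fun T => T ∪ D) ?_ ?_ ?_ ?_ ?_
  · intro S hS
    simp only [Finset.mem_filter, Finset.mem_powerset] at hS ⊢
    exact Finset.sdiff_subset_sdiff hS.1 le_rfl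
  · intro T hT
    simp only [Finset.mem_filter, Finset.mem_powerset] at hT ⊢
    constructor
    · exact Finset.union_subset ((Finset.subset_sdiff.mp hT).1) hD
    · exact Finset.subset_union_right
  · intro S hS
    simp only [Finset.mem_filter, Finset.mem_powerset] at hS
    show S \ D ∪ D = S
    exact Finset.sdiff_union_of_subset hS.2
  · intro T hT
    simp only [Finset.mem_powerset] at hT
    have hdisj : Disjoint T D := (Finset.subset_sdiff.mp hT).2
    show (T ∪ D) \ D = T
    rw [Finset.union_sdiff_cancel_right hdisj]
  · intro S hS
    simp only [Finset.mem_filter, Finset.mem_powerset] at hS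
    obtain ⟨hSA, hDS⟩ := hS
    have h1 : (S \ D).card + D.card = S.card := Finset.card_sdiff_add_card_eq_card hDS
    have h2 : (A \ D).card - (S \ D).card = A.card - S.card := by
      rw [Finset.card_sdiff_of_subset hD, Finset.card_sdiff_of_subset hDS]
      have := Finset.card_le_card hSA
      have := Finset.card_le_card hDS
      omega
    rw [h1, h2]

lemma exp_card (A : Finset X) (p q : ℝ) (hpq : p + q = 1) :
    ∑ S ∈ A.powerset, (p ^ S.card * q ^ (A.card - S.card)) * S.card
      = p * A.card := by
  have h1 : ∀ S ∈ A.powerset, (p ^ S.card * q ^ (A.card - S.card)) * S.card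
      = ∑ x ∈ A, if x ∈ S then p ^ S.card * q ^ (A.card - S.card) else 0 := by
    intro S hS
    rw [Finset.sum_ite_mem, Finset.inter_eq_right.mpr (Finset.mem_powerset.mp hS),
      Finset.sum_const, nsmul_eq_mul, mul_comm]
  rw [Finset.sum_congr rfl h1, Finset.sum_comm]
  have h2 : ∀ x ∈ A, (∑ S ∈ A.powerset, if x ∈ S then p ^ S.card * q ^ (A.card - S.card) else 0)
      = p := by
    intro x hx
    rw [← Finset.sum_filter]
    have hfe : A.powerset.filter (fun S => x ∈ S) = A.powerset.filter (fun S => {x} ⊆ S) := by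
      apply Finset.filter_congr; intro S _; simp
    rw [hfe, sum_weights_superset A {x} (Finset.singleton_subset_iff.mpr hx) p q hpq,
      Finset.card_singleton, pow_one]
  rw [Finset.sum_congr rfl h2, Finset.sum_const, nsmul_eq_mul, mul_comm]

lemma exp_badcount (A : Finset X) (Bad : Finset (Finset X)) (hBad : ∀ D ∈ Bad, D ⊆ A)
    (p q : ℝ) (hpq : p + q = 1) :
    ∑ S ∈ A.powerset,
        (p ^ S.card * q ^ (A.card - S.card)) * ((Bad.filter (fun D => D ⊆ S)).card : ℝ)
      = ∑ D ∈ Bad, p ^ D.card := by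
  have h1 : ∀ S ∈ A.powerset, (p ^ S.card * q ^ (A.card - S.card)) *
        ((Bad.filter (fun D => D ⊆ S)).card : ℝ)
      = ∑ D ∈ Bad, if D ⊆ S then p ^ S.card * q ^ (A.card - S.card) else 0 := by
    intro S _
    rw [← Finset.sum_filter, Finset.sum_const, nsmul_eq_mul, mul_comm]
  rw [Finset.sum_congr rfl h1, Finset.sum_comm]
  refine Finset.sum_congr rfl fun D hD => ?_
  rw [← Finset.sum_filter]
  exact sum_weights_superset A D (hBad D hD) p q hpq

lemma exists_good (A : Finset X) (Bad : Finset (Finset X)) (hBad : ∀ D ∈ Bad, D ⊆ A)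
    (p q : ℝ) (hp : 0 < p) (hq : 0 < q) (hpq : p + q = 1) :
    ∃ S ⊆ A, p * A.card - ∑ D ∈ Bad, p ^ D.card
        ≤ (S.card : ℝ) - ((Bad.filter (fun D => D ⊆ S)).card : ℝ) := by
  set W : Finset X → ℝ := fun S => p ^ S.card * q ^ (A.card - S.card) with hW
  have hWpos : ∀ S : Finset X, 0 < W S := fun S => by positivity
  set E : ℝ := p * A.card - ∑ D ∈ Bad, p ^ D.card with hE
  have hsum : ∑ S ∈ A.powerset, W S * E
      = ∑ S ∈ A.powerset, W S * ((S.card : ℝ) - ((Bad.filter (fun D => D ⊆ S)).card : ℝ)) := by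
    rw [← Finset.sum_mul, sum_weights A p q hpq, one_mul, hE]
    simp only [mul_sub]
    rw [Finset.sum_sub_distrib, exp_card A p q hpq, exp_badcount A Bad hBad p q hpq]
  obtain ⟨S, hS, hle⟩ := Finset.exists_le_of_sum_le ⟨∅, Finset.empty_mem_powerset A⟩
    (le_of_eq hsum)
  exact ⟨S, Finset.mem_powerset.mp hS, le_of_mul_le_mul_left hle (hWpos S)⟩

lemma exists_del (S : Finset X) (Bad : Finset (Finset X)) (hne : ∀ D ∈ Bad, D.Nonempty) :
    ∃ S' ⊆ S, (∀ D ∈ Bad, ¬ D ⊆ S') ∧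
      (S.card : ℝ) - ((Bad.filter (fun D => D ⊆ S)).card : ℝ) ≤ (S'.card : ℝ) := by
  classical
  set B := Bad.filter (fun D => D ⊆ S) with hB
  set T : Finset X := B.attach.image
    (fun D => (hne D.1 (Finset.mem_filter.mp D.2).1).choose) with hT
  refine ⟨S \ T, Finset.sdiff_subset, ?_, ?_⟩
  · intro D hD hDsub
    by_cases hDS : D ⊆ S
    · have hDB : D ∈ B := Finset.mem_filter.mpr ⟨hD, hDS⟩
      have hpick : (hne D hD).choose ∈ T := by
        rw [hT]
        exact Finset.mem_image.mpr ⟨⟨D, hDB⟩, Finset.mem_attach _ _, rfl⟩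
      have hmem := hDsub (hne D hD).choose_spec
      rw [Finset.mem_sdiff] at hmem
      exact hmem.2 hpick
    · exact hDS (hDsub.trans Finset.sdiff_subset)
  · have hTcard : T.card ≤ B.card :=
      (Finset.card_image_le).trans (le_of_eq (Finset.card_attach))
    have h1 : S.card ≤ (S \ T).card + T.card := Finset.card_le_card_sdiff_add_card
    have h2 : S.card ≤ (S \ T).card + B.card := by omega
    have h3 : (S.card : ℝ) ≤ ((S \ T).card : ℝ) + (B.card : ℝ) := by exact_mod_cast h2
    rw [hB] at h3
    linarith

end ExAux

namespace ExAux

lemma list_len4 {α : Type*} (l : List α) (h : l.length = 4) :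
    ∃ a b c d : α, l = [a, b, c, d] := by
  match l, h with
  | [a, b, c, d], _ => exact ⟨a, b, c, d, rfl⟩

def listCyc {V : Type*} [DecidableEq V] : List V → Finset (Sym2 V)
  | [a, b, c, d] => cycEdges a b c d
  | _ => ∅

def canonCyc {V : Type*} [LinearOrder V] [DecidableEq V] (A : Finset V) : Finset (Sym2 V) :=
  listCyc (A.sort (· ≤ ·))

lemma edgeVerts_cycEdges {V : Type*} [DecidableEq V] (a b c d : V) :
    edgeVerts (cycEdges a b c d) = {a, b, c, d} := by
  ext x
  simp only [edgeVerts, cycEdges, Finset.sup_insert, Finset.sup_singleton, Sym2.lift_mk,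
    Finset.mem_insert, Finset.mem_singleton, Finset.mem_sup, Finset.sup_eq_union,
    Finset.mem_union]
  tauto

lemma canonCyc_spec {V : Type*} [LinearOrder V] [DecidableEq V] (A : Finset V) (hA : A.card = 4) :
    IsFourCycle (canonCyc A) ∧ edgeVerts (canonCyc A) = A := by
  classical
  obtain ⟨a, b, c, d, hl⟩ := list_len4 (A.sort (· ≤ ·)) (by rw [Finset.length_sort]; exact hA)
  have hnd : ([a, b, c, d] : List V).Nodup := hl ▸ A.sort_nodup (· ≤ ·)
  have hcanon : canonCyc A = cycEdges a b c d := by rw [canonCyc, hl]; rfl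
  refine ⟨⟨a, b, c, d, hnd, hcanon⟩, ?_⟩
  rw [hcanon, edgeVerts_cycEdges]
  ext x
  simp only [Finset.mem_insert, Finset.mem_singleton]
  rw [show (x = a ∨ x = b ∨ x = c ∨ x = d) ↔ x ∈ ([a, b, c, d] : List V) by simp]
  rw [← hl, Finset.mem_sort]

def CycFam (v : ℕ) : Finset (Finset (Sym2 (Fin v))) :=
  ((Finset.univ : Finset (Fin v)).powersetCard 4).image canonCyc

set_option maxHeartbeats 1000000 in
lemma mem_CycFam {v : ℕ} {E : Finset (Sym2 (Fin v))} (hE : E ∈ CycFam v) :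
    IsFourCycle E ∧ (edgeVerts E).card = 4 ∧ canonCyc (edgeVerts E) = E := by
  obtain ⟨A, hA, rfl⟩ := Finset.mem_image.mp hE
  have hA4 : A.card = 4 := (Finset.mem_powersetCard.mp hA).2
  obtain ⟨h1, h2⟩ := canonCyc_spec A hA4
  exact ⟨h1, by rw [h2]; exact hA4, by rw [h2]⟩

lemma card_CycFam (v : ℕ) : (CycFam v).card = v.choose 4 := by
  rw [CycFam, Finset.card_image_of_injOn, Finset.card_powersetCard, Finset.card_univ,
    Fintype.card_fin]
  intro A hA B hB hAB
  have hA4 : A.card = 4 := (Finset.mem_powersetCard.mp hA).2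
  have hB4 : B.card = 4 := (Finset.mem_powersetCard.mp hB).2
  rw [← (canonCyc_spec A hA4).2, ← (canonCyc_spec B hB4).2, hAB]

lemma card_small_sets (v k : ℕ) (hv : 1 ≤ v) :
    (((Finset.univ : Finset (Fin v)).powerset).filter (fun U => U.card ≤ k)).card
      ≤ (k + 1) * v ^ k := by
  have hsub : ((Finset.univ : Finset (Fin v)).powerset).filter (fun U => U.card ≤ k)
      ⊆ (Finset.range (k + 1)).biUnion
        (fun i => (Finset.univ : Finset (Fin v)).powersetCard i) := by
    intro U hU
    rw [Finset.mem_filter] at hU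
    rw [Finset.mem_biUnion]
    exact ⟨U.card, Finset.mem_range.mpr (Nat.lt_succ_of_le hU.2),
      Finset.mem_powersetCard.mpr ⟨Finset.subset_univ U, rfl⟩⟩
  refine (Finset.card_le_card hsub).trans ((Finset.card_biUnion_le).trans ?_)
  have hbound : ∀ i ∈ Finset.range (k + 1),
      ((Finset.univ : Finset (Fin v)).powersetCard i).card ≤ v ^ k := by
    intro i hi
    rw [Finset.card_powersetCard, Finset.card_univ, Fintype.card_fin]
    exact (Nat.choose_le_pow v i).trans (Nat.pow_le_pow_right hv (Nat.lt_succ_iff.mp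
      (Finset.mem_range.mp hi)))
  calc ∑ i ∈ Finset.range (k + 1), ((Finset.univ : Finset (Fin v)).powersetCard i).card
      ≤ ∑ _i ∈ Finset.range (k + 1), v ^ k := Finset.sum_le_sum hbound
    _ = (k + 1) * v ^ k := by rw [Finset.sum_const, Finset.card_range, smul_eq_mul]

lemma card_small_sets6 (v : ℕ) (hv : 1 ≤ v) :
    (((Finset.univ : Finset (Fin v)).powerset).filter (fun U => U.card ≤ 6)).card
      ≤ v.choose 6 + 6 * v ^ 5 := by
  have hsub : ((Finset.univ : Finset (Fin v)).powerset).filter (fun U => U.card ≤ 6)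
      ⊆ (Finset.range 7).biUnion
        (fun i => (Finset.univ : Finset (Fin v)).powersetCard i) := by
    intro U hU
    rw [Finset.mem_filter] at hU
    rw [Finset.mem_biUnion]
    exact ⟨U.card, Finset.mem_range.mpr (Nat.lt_succ_of_le hU.2),
      Finset.mem_powersetCard.mpr ⟨Finset.subset_univ U, rfl⟩⟩
  refine (Finset.card_le_card hsub).trans ((Finset.card_biUnion_le).trans ?_)
  rw [Finset.sum_range_succ]
  have h6 : ((Finset.univ : Finset (Fin v)).powersetCard 6).card = v.choose 6 := by
    rw [Finset.card_powersetCard, Finset.card_univ, Fintype.card_fin]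
  have hbound : ∀ i ∈ Finset.range 6,
      ((Finset.univ : Finset (Fin v)).powersetCard i).card ≤ v ^ 5 := by
    intro i hi
    rw [Finset.card_powersetCard, Finset.card_univ, Fintype.card_fin]
    exact (Nat.choose_le_pow v i).trans (Nat.pow_le_pow_right hv (Nat.lt_succ_iff.mp
      (Finset.mem_range.mp hi)))
  have : ∑ i ∈ Finset.range 6, ((Finset.univ : Finset (Fin v)).powersetCard i).card
      ≤ 6 * v ^ 5 := by
    calc ∑ i ∈ Finset.range 6, ((Finset.univ : Finset (Fin v)).powersetCard i).card
        ≤ ∑ _i ∈ Finset.range 6, v ^ 5 := Finset.sum_le_sum hbound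
      _ = 6 * v ^ 5 := by rw [Finset.sum_const, Finset.card_range, smul_eq_mul]
    
  omega

lemma image_edgeVerts_card {v : ℕ} {D : Finset (Finset (Sym2 (Fin v)))}
    (hD : D ⊆ CycFam v) : (D.image edgeVerts).card = D.card := by
  apply Finset.card_image_of_injOn
  intro E hE F hF hEF
  rw [← (mem_CycFam (hD hE)).2.2, ← (mem_CycFam (hD hF)).2.2, hEF]

lemma image_edgeVerts_recover {v : ℕ} {D : Finset (Finset (Sym2 (Fin v)))}
    (hD : D ⊆ CycFam v) : (D.image edgeVerts).image canonCyc = D := by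
  rw [Finset.image_image]
  have : ∀ E ∈ D, (canonCyc ∘ edgeVerts) E = id E := by
    intro E hE
    exact (mem_CycFam (hD hE)).2.2
  rw [Finset.image_congr this, Finset.image_id]

lemma count_span (v j k : ℕ) :
    (((CycFam v).powerset).filter
        (fun D => D.card = j ∧ (D.sup edgeVerts).card ≤ k)).card
      ≤ ((k.choose 4).choose j) * ((((Finset.univ : Finset (Fin v)).powerset).filter
          (fun U => U.card ≤ k)).card) := by
  apply Finset.card_le_mul_card_image_of_maps_to
    (f := fun D => D.sup edgeVerts)
  · intro D hD
    rw [Finset.mem_filter] at hD ⊢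
    exact ⟨Finset.mem_powerset.mpr (Finset.subset_univ _), hD.2.2⟩
  · intro U hU
    rw [Finset.mem_filter, Finset.mem_powerset] at hU
    -- fiber over U injects into ((U.powersetCard 4).powersetCard j)
    have hinj : ∀ D ∈ (((CycFam v).powerset).filter
          (fun D => D.card = j ∧ (D.sup edgeVerts).card ≤ k)).filter
          (fun D => D.sup edgeVerts = U),
        D.image edgeVerts ∈ (U.powersetCard 4).powersetCard j := by
      intro D hD
      simp only [Finset.mem_filter, Finset.mem_powerset] at hD
      obtain ⟨⟨hDC, hDj, _⟩, hDU⟩ := hD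
      rw [Finset.mem_powersetCard]
      constructor
      · intro A hA
        obtain ⟨E, hE, rfl⟩ := Finset.mem_image.mp hA
        rw [Finset.mem_powersetCard]
        exact ⟨hDU ▸ Finset.le_sup hE, (mem_CycFam (hDC hE)).2.1⟩
      · rw [image_edgeVerts_card hDC, hDj]
    have hcard := Finset.card_le_card_of_injOn (Finset.image edgeVerts) hinj ?_
    · refine hcard.trans ?_
      rw [Finset.card_powersetCard, Finset.card_powersetCard]
      exact Nat.choose_le_choose j (Nat.choose_le_choose 4 hU.2)
    · intro D1 h1 D2 h2 h12
      simp only [Finset.coe_filter, Set.mem_setOf_eq, Finset.mem_filter,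
        Finset.mem_powerset] at h1 h2
      rw [← image_edgeVerts_recover h1.1.1, ← image_edgeVerts_recover h2.1.1, h12]

end ExAux

set_option maxHeartbeats 2000000 in
/-- For fixed `r ≥ 2` and `0 < c' < 1/44` there is a function `h(v) = O(v)` such that
for all sufficiently large `v` there is an `F`-free set of 4-cycles on `v` vertices of
size at least `c'(1 - 44c')/16 · v² - h(v)`; that is,
`ex(v, F) ≥ c'(1 - 44c')/16 · v² - h(v)`. -/
theorem ex_F_free_lower_bound (r : ℕ) (hr : 2 ≤ r) (c' : ℝ)
    (hc0 : 0 < c') (hc1 : c' < 1 / 44) :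
    ∃ (h : ℕ → ℝ) (K : ℝ), (∀ v : ℕ, |h v| ≤ K * v) ∧
      ∃ v₀ : ℕ, ∀ v : ℕ, v₀ ≤ v →
        ∃ S : Finset (Finset (Sym2 (Fin v))),
          (∀ E ∈ S, IsFourCycle E) ∧ FFree r S ∧
            c' * (1 - 44 * c') / 16 * (v : ℝ) ^ 2 - h v ≤ (S.card : ℝ) := by
  classical
  set Kr : ℝ := ∑ j ∈ Finset.Icc 3 r, ((((j+3).choose 4).choose j * (j+4) : ℕ) : ℝ) with hKr
  have hKr0 : 0 ≤ Kr := Finset.sum_nonneg fun j _ => by positivity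
  set K : ℝ := c' + 1418 * c' ^ 2 + Kr + 1 with hKdef
  have hK0 : 0 < K := by positivity
  refine ⟨fun v => K * v, K, fun v => by rw [abs_of_nonneg (by positivity)], 3, ?_⟩
  intro v hv
  have hv1 : (1:ℝ) ≤ (v:ℝ) := by exact_mod_cast (by omega : 1 ≤ v)
  have hvpos : (0:ℝ) < (v:ℝ) := by linarith
  have hv2pos : (0:ℝ) < (v:ℝ)^2 := by positivity
  set p : ℝ := 3 * c' / (2 * (v:ℝ)^2) with hp_def
  have hp : 0 < p := by rw [hp_def]; positivity
  have hple : p ≤ 1 / (v:ℝ)^2 := by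
    rw [hp_def, div_le_div_iff₀ (by positivity) (by positivity)]
    nlinarith
  have hq : 0 < 1 - p := by
    rw [hp_def, sub_pos, div_lt_one (by positivity)]
    nlinarith [sq_nonneg ((v:ℝ) - 1)]
  set CC := ExAux.CycFam v with hCC
  clear_value CC
  have hmemCC : ∀ E ∈ CC, IsFourCycle E ∧ (edgeVerts E).card = 4 := by
    rw [hCC]; exact fun E hE => ⟨(ExAux.mem_CycFam hE).1, (ExAux.mem_CycFam hE).2.1⟩
  have hcardCC : CC.card = v.choose 4 := by rw [hCC]; exact ExAux.card_CycFam v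
  have hcount : ∀ j k : ℕ, (((CC.powerset)).filter
      (fun D => D.card = j ∧ (D.sup edgeVerts).card ≤ k)).card
      ≤ ((k.choose 4).choose j) * ((((Finset.univ : Finset (Fin v)).powerset).filter
          (fun U => U.card ≤ k)).card) := by
    rw [hCC]; exact fun j k => ExAux.count_span v j k
  set Bad := (CC.powerset).filter (fun D => (D.card = 2 ∧ (D.sup edgeVerts).card ≤ 6)
      ∨ (3 ≤ D.card ∧ D.card ≤ r ∧ (D.sup edgeVerts).card ≤ D.card + 3)) with hBadDef
  have hBadsub : ∀ D ∈ Bad, D ⊆ CC := fun D hD =>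
    Finset.mem_powerset.mp (Finset.mem_filter.mp hD).1
  have hBadcard : ∀ D ∈ Bad, 2 ≤ D.card := by
    intro D hD
    rcases (Finset.mem_filter.mp hD).2 with ⟨h, _⟩ | ⟨h, _⟩ <;> omega
  obtain ⟨S, hSC, hSbound⟩ := ExAux.exists_good CC Bad hBadsub p (1 - p) hp hq (by ring)
  obtain ⟨S', hS'S, hS'avoid, hS'card⟩ := ExAux.exists_del S Bad
    (fun D hD => Finset.card_pos.mp (by have := hBadcard D hD; omega))
  have hS'C : S' ⊆ CC := hS'S.trans hSC
  refine ⟨S', fun E hE => (hmemCC E (hS'C hE)).1, ?_, ?_⟩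
  · -- FFree
    intro D hDS'
    have hDC : D ⊆ CC := hDS'.trans hS'C
    have hDP : D ∈ CC.powerset := Finset.mem_powerset.mpr hDC
    refine ⟨?_, ?_, ?_⟩
    · rintro ⟨hcard, -, hspan⟩
      exact hS'avoid D (Finset.mem_filter.mpr ⟨hDP, Or.inl ⟨hcard, by omega⟩⟩) hDS'
    · rintro ⟨hcard, -, hspan⟩
      exact hS'avoid D (Finset.mem_filter.mpr ⟨hDP, Or.inl ⟨hcard, by omega⟩⟩) hDS'
    · intro j hj2 hjr
      rintro ⟨hcard, -, -, hspan⟩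
      rcases eq_or_lt_of_le hj2 with hj | hj
      · exact hS'avoid D (Finset.mem_filter.mpr ⟨hDP, Or.inl ⟨by omega, by omega⟩⟩) hDS'
      · exact hS'avoid D (Finset.mem_filter.mpr ⟨hDP,
          Or.inr ⟨by omega, by omega, by omega⟩⟩) hDS'
  · -- cardinality bound
    have hchain : p * (CC.card : ℝ) - ∑ D ∈ Bad, p ^ D.card ≤ (S'.card : ℝ) :=
      le_trans hSbound hS'card
    refine le_trans ?_ hchain
    -- bound the bad sum
    have hsplit : ∑ D ∈ Bad, p ^ D.card
        = (∑ D ∈ Bad.filter (fun D => D.card = 2), p ^ D.card)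
          + ∑ D ∈ Bad.filter (fun D => ¬ D.card = 2), p ^ D.card :=
      (Finset.sum_filter_add_sum_filter_not Bad _ _).symm
    -- Bad2
    have hB2sum : ∑ D ∈ Bad.filter (fun D => D.card = 2), p ^ D.card
        = ((Bad.filter (fun D => D.card = 2)).card : ℝ) * p ^ 2 := by
      rw [Finset.sum_congr rfl (fun D hD => by rw [(Finset.mem_filter.mp hD).2]),
        Finset.sum_const, nsmul_eq_mul]
    have hB2sub : Bad.filter (fun D => D.card = 2) ⊆ (CC.powerset).filter
        (fun D => D.card = 2 ∧ (D.sup edgeVerts).card ≤ 6) := by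
      intro D hD
      obtain ⟨hDB, hD2⟩ := Finset.mem_filter.mp hD
      obtain ⟨hDP, hor⟩ := Finset.mem_filter.mp hDB
      refine Finset.mem_filter.mpr ⟨hDP, hD2, ?_⟩
      rcases hor with ⟨_, h⟩ | ⟨h3, _, _⟩
      · exact h
      · omega
    have hB2card : (Bad.filter (fun D => D.card = 2)).card
        ≤ 105 * (v.choose 6 + 6 * v ^ 5) := by
      refine (Finset.card_le_card hB2sub).trans ?_
      refine (hcount 2 6).trans ?_
      have h105 : (Nat.choose 6 4).choose 2 = 105 := by decide
      rw [h105]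
      exact Nat.mul_le_mul_left 105 (ExAux.card_small_sets6 v (by omega))
    have hchoose6 : ((v.choose 6 : ℕ) : ℝ) ≤ (v:ℝ)^6 / 720 := by
      have := Nat.choose_le_pow_div (α := ℝ) 6 v
      have h720 : ((Nat.factorial 6 : ℕ) : ℝ) = 720 := by norm_num [Nat.factorial]
      rw [h720] at this
      exact_mod_cast this
    have hB2 : ∑ D ∈ Bad.filter (fun D => D.card = 2), p ^ D.card
        ≤ 21/64 * c'^2 * (v:ℝ)^2 + 2835/2 * c'^2 * (v:ℝ) := by
      rw [hB2sum]
      have hc : ((Bad.filter (fun D => D.card = 2)).card : ℝ)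
          ≤ 105 * ((v:ℝ)^6 / 720 + 6 * (v:ℝ)^5) := by
        have h1 : ((Bad.filter (fun D => D.card = 2)).card : ℝ)
            ≤ 105 * (((v.choose 6 : ℕ) : ℝ) + 6 * (v:ℝ)^5) := by
          exact_mod_cast hB2card
        nlinarith [hchoose6]
      have hp2 : p ^ 2 = 9 * c'^2 / (4 * (v:ℝ)^4) := by
        rw [hp_def]; field_simp; ring
      rw [hp2]
      have hv0 : (v:ℝ) ≠ 0 := by positivity
      calc ((Bad.filter (fun D => D.card = 2)).card : ℝ) * (9 * c'^2 / (4 * (v:ℝ)^4))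
          ≤ (105 * ((v:ℝ)^6 / 720 + 6 * (v:ℝ)^5)) * (9 * c'^2 / (4 * (v:ℝ)^4)) := by
            apply mul_le_mul_of_nonneg_right hc (by positivity)
        _ = 21/64 * c'^2 * (v:ℝ)^2 + 2835/2 * c'^2 * (v:ℝ) := by
            field_simp
            ring
    -- Bad3
    have hmaps : ∀ D ∈ Bad.filter (fun D => ¬ D.card = 2), D.card ∈ Finset.Icc 3 r := by
      intro D hD
      obtain ⟨hDB, hD2⟩ := Finset.mem_filter.mp hD
      rcases (Finset.mem_filter.mp hDB).2 with ⟨h, _⟩ | ⟨h3, hr', _⟩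
      · exact absurd h hD2
      · exact Finset.mem_Icc.mpr ⟨h3, hr'⟩
    have hB3split : ∑ D ∈ Bad.filter (fun D => ¬ D.card = 2), p ^ D.card
        = ∑ j ∈ Finset.Icc 3 r, ∑ D ∈ (Bad.filter (fun D => ¬ D.card = 2)).filter
            (fun D => D.card = j), p ^ D.card :=
      (Finset.sum_fiberwise_of_maps_to hmaps _).symm
    have hperj : ∀ j ∈ Finset.Icc 3 r,
        ∑ D ∈ (Bad.filter (fun D => ¬ D.card = 2)).filter (fun D => D.card = j), p ^ D.card
          ≤ ((((j+3).choose 4).choose j * (j+4) : ℕ) : ℝ) := by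
      intro j hj
      obtain ⟨hj3, hjr⟩ := Finset.mem_Icc.mp hj
      have hsub : (Bad.filter (fun D => ¬ D.card = 2)).filter (fun D => D.card = j)
          ⊆ (CC.powerset).filter
            (fun D => D.card = j ∧ (D.sup edgeVerts).card ≤ j + 3) := by
        intro D hD
        obtain ⟨hD3, hDj⟩ := Finset.mem_filter.mp hD
        obtain ⟨hDB, hD2⟩ := Finset.mem_filter.mp hD3
        obtain ⟨hDP, hor⟩ := Finset.mem_filter.mp hDB
        refine Finset.mem_filter.mpr ⟨hDP, hDj, ?_⟩
        rcases hor with ⟨h, _⟩ | ⟨_, _, h⟩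
        · exact absurd h hD2
        · omega
      have hcardj : ((Bad.filter (fun D => ¬ D.card = 2)).filter (fun D => D.card = j)).card
          ≤ ((j+3).choose 4).choose j * ((j + 3 + 1) * v ^ (j+3)) :=
        (Finset.card_le_card hsub).trans ((hcount j (j+3)).trans
          (Nat.mul_le_mul_left _ (ExAux.card_small_sets v (j+3) (by omega))))
      have hsumj : ∑ D ∈ (Bad.filter (fun D => ¬ D.card = 2)).filter (fun D => D.card = j),
            p ^ D.card
          = (((Bad.filter (fun D => ¬ D.card = 2)).filter (fun D => D.card = j)).card : ℝ)
            * p ^ j := by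
        rw [Finset.sum_congr rfl (fun D hD => by rw [(Finset.mem_filter.mp hD).2]),
          Finset.sum_const, nsmul_eq_mul]
      rw [hsumj]
      have hpj : p ^ j * (v:ℝ) ^ (j+3) ≤ 1 := by
        have hppow : p ^ j ≤ (1 / (v:ℝ)^2) ^ j := pow_le_pow_left₀ hp.le hple j
        have h2 : (1 / (v:ℝ)^2) ^ j * (v:ℝ)^(j+3) ≤ 1 := by
          rw [div_pow, one_pow, ← pow_mul, div_mul_eq_mul_div, one_mul,
            div_le_one (by positivity)]
          exact pow_le_pow_right₀ hv1 (by omega)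
        calc p ^ j * (v:ℝ)^(j+3) ≤ (1 / (v:ℝ)^2) ^ j * (v:ℝ)^(j+3) :=
              mul_le_mul_of_nonneg_right hppow (by positivity)
          _ ≤ 1 := h2
      calc (((Bad.filter (fun D => ¬ D.card = 2)).filter (fun D => D.card = j)).card : ℝ)
            * p ^ j
          ≤ ((((j+3).choose 4).choose j * ((j + 3 + 1) * v ^ (j+3)) : ℕ) : ℝ) * p ^ j := by
            exact mul_le_mul_of_nonneg_right (by exact_mod_cast hcardj) (pow_nonneg hp.le j)
        _ = ((((j+3).choose 4).choose j * (j+4) : ℕ) : ℝ) * (p ^ j * (v:ℝ)^(j+3)) := by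
            push_cast; ring
        _ ≤ ((((j+3).choose 4).choose j * (j+4) : ℕ) : ℝ) := by
            exact mul_le_of_le_one_right (by positivity) hpj
    have hB3 : ∑ D ∈ Bad.filter (fun D => ¬ D.card = 2), p ^ D.card ≤ Kr := by
      rw [hB3split, hKr]
      exact Finset.sum_le_sum hperj
    -- lower bound for p * CC.card
    have hchoose4 : ((v.choose 4 : ℕ) : ℝ) ≥ ((v:ℝ) - 3)^4 / 24 := by
      have h1 := Nat.pow_le_choose (α := ℝ) 4 v
      have h24 : ((Nat.factorial 4 : ℕ) : ℝ) = 24 := by norm_num [Nat.factorial]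
      rw [h24] at h1
      have hcast : (((v + 1 - 4 : ℕ) : ℕ) : ℝ) = (v:ℝ) - 3 := by
        have : v + 1 - 4 = v - 3 := by omega
        rw [this, Nat.cast_sub (by omega)]
        norm_num
      rw [ge_iff_le]
      calc ((v:ℝ) - 3)^4 / 24 = (((v + 1 - 4 : ℕ) : ℝ))^4 / 24 := by rw [hcast]
        _ ≤ ((v.choose 4 : ℕ) : ℝ) := h1
    have hlower : p * (CC.card : ℝ) ≥ c'/16 * (v:ℝ)^2 - c' * (v:ℝ) := by
      rw [hcardCC, hp_def]
      have hv0 : (v:ℝ) ≠ 0 := by positivity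
      have hv3 : (3:ℝ) ≤ (v:ℝ) := by exact_mod_cast hv
      have key : c'/16 * (v:ℝ)^2 - c' * (v:ℝ)
          ≤ 3 * c' / (2 * (v:ℝ)^2) * (((v:ℝ) - 3)^4 / 24) := by
        rw [div_mul_div_comm, le_div_iff₀ (by positivity)]
        nlinarith [hc0.le, hv3, hvpos,
          mul_nonneg (mul_nonneg hc0.le hvpos.le) (sub_nonneg.mpr (by linarith : (2:ℝ) ≤ (v:ℝ))),
          mul_nonneg (mul_nonneg (mul_nonneg hc0.le hvpos.le) hvpos.le)
            (sub_nonneg.mpr (by linarith : (2:ℝ) ≤ (v:ℝ)))]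
      rw [ge_iff_le]
      refine le_trans key ?_
      exact mul_le_mul_of_nonneg_left (by linarith [hchoose4]) (by positivity)
    -- final arithmetic
    have hKrv : Kr ≤ Kr * (v:ℝ) := le_mul_of_one_le_right hKr0 hv1
    rw [hsplit]
    have hgoal : c' * (1 - 44 * c') / 16 * (v:ℝ)^2 - K * (v:ℝ)
        ≤ (c'/16 * (v:ℝ)^2 - c' * (v:ℝ))
          - (21/64 * c'^2 * (v:ℝ)^2 + 2835/2 * c'^2 * (v:ℝ)) - Kr * (v:ℝ) := by
      rw [hKdef]
      nlinarith [hv1, hc0, hvpos, sq_nonneg (v:ℝ), mul_pos hc0 hc0,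
        mul_nonneg (mul_nonneg (le_of_lt hc0) (le_of_lt hc0)) (le_of_lt hvpos),
        mul_nonneg (mul_nonneg (mul_nonneg (le_of_lt hc0) (le_of_lt hc0)) (le_of_lt hvpos)) (le_of_lt hvpos),
        mul_nonneg hKr0 (sub_nonneg.mpr hv1)]
    linarith [hB2, hB3, hlower, hgoal, hKrv]
end
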